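/- Under the FedGDA-GT local update z_{i,k+1} = z_{i,k} - η(F_i(z_{i,k}) - F_i(z^t) + F(z^t)) with z_{i,0} = z^t, if each F_i is μ-strongly monotone and L-Lipschitz and 0 < η < 2μ/L², then the client drift satisfies ‖z_{i,k} - z^t‖ ≤ ηK‖F(z^t)‖ ≤ ηKL‖z^t - z*‖ for all 1 ≤ k ≤ K, where z* satisfies F(z*) = 0. -/

import Mathlib

set_option maxHeartbeats 1000000 in
/-- Client-drift bound for FedGDA-GT: with `μ`-strongly monotone, `L`-Lipschitz operators
`Fᵢ`, step size `0 < η < 2μ/L²`, and local recursion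
`z_{i,k+1} = z_{i,k} - η (Fᵢ(z_{i,k}) - Fᵢ(zᵗ) + F(zᵗ))` started at `z_{i,0} = zᵗ`,
one has `‖z_{i,k} - zᵗ‖ ≤ ηK‖F(zᵗ)‖ ≤ ηKL‖zᵗ - z*‖` for `1 ≤ k ≤ K`, where `F(z*) = 0`. -/
theorem stmt11 {d : ℕ} (m : ℕ) (hm : 0 < m) (μ L : ℝ) (hμ : 0 < μ) (hL : 0 < L)
    (Fi : Fin m → EuclideanSpace ℝ (Fin d) → EuclideanSpace ℝ (Fin d))
    (hmono : ∀ i u v, μ * ‖u - v‖ ^ 2 ≤ (inner ℝ (Fi i u - Fi i v) (u - v) : ℝ))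
    (hlip : ∀ i u v, ‖Fi i u - Fi i v‖ ≤ L * ‖u - v‖)
    (η : ℝ) (hη : 0 < η) (hη2 : η < 2 * μ / L ^ 2)
    (K : ℕ) (zt zs : EuclideanSpace ℝ (Fin d))
    (hzs : (m : ℝ)⁻¹ • ∑ j, Fi j zs = 0)
    (i : Fin m) (w : ℕ → EuclideanSpace ℝ (Fin d)) (hw0 : w 0 = zt)
    (hw : ∀ k, w (k + 1) = w k -
      η • (Fi i (w k) - Fi i zt + (m : ℝ)⁻¹ • ∑ j, Fi j zt)) :
    ∀ k, 1 ≤ k → k ≤ K →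
      ‖w k - zt‖ ≤ η * K * ‖(m : ℝ)⁻¹ • ∑ j, Fi j zt‖ ∧
        η * K * ‖(m : ℝ)⁻¹ • ∑ j, Fi j zt‖ ≤ η * K * L * ‖zt - zs‖ := by
  set Fb : EuclideanSpace ℝ (Fin d) := (m : ℝ)⁻¹ • ∑ j, Fi j zt with hFb
  have hL2 : (0:ℝ) < L ^ 2 := by positivity
  have hηL : η * L ^ 2 ≤ 2 * μ := by
    have := (lt_div_iff₀ hL2).mp hη2
    linarith
  -- contraction step
  have contract : ∀ k, ‖w k - zt - η • (Fi i (w k) - Fi i zt)‖ ≤ ‖w k - zt‖ := by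
    intro k
    set u := w k - zt with hu
    set Δ := Fi i (w k) - Fi i zt with hΔ
    have h1 : μ * ‖u‖ ^ 2 ≤ (inner ℝ Δ u : ℝ) := hmono i (w k) zt
    have h2 : ‖Δ‖ ≤ L * ‖u‖ := hlip i (w k) zt
    have hsq : ‖u - η • Δ‖ ^ 2 ≤ ‖u‖ ^ 2 := by
      have e : ‖u - η • Δ‖ ^ 2 = ‖u‖ ^ 2 - 2 * (η * inner ℝ u Δ) + η ^ 2 * ‖Δ‖ ^ 2 := by
        rw [norm_sub_sq_real, real_inner_smul_right, norm_smul]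
        rw [mul_pow]
        simp [abs_of_pos hη]
      rw [e]
      have hiu : (inner ℝ Δ u : ℝ) = (inner ℝ u Δ : ℝ) := real_inner_comm u Δ
      have hΔ2 : ‖Δ‖ ^ 2 ≤ L ^ 2 * ‖u‖ ^ 2 := by
        nlinarith [norm_nonneg Δ, norm_nonneg u]
      have a1 : η * (μ * ‖u‖ ^ 2) ≤ η * inner ℝ Δ u := mul_le_mul_of_nonneg_left h1 hη.le
      have a2 : η ^ 2 * ‖Δ‖ ^ 2 ≤ η ^ 2 * (L ^ 2 * ‖u‖ ^ 2) :=
        mul_le_mul_of_nonneg_left hΔ2 (sq_nonneg η)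
      have a3 : η * ‖u‖ ^ 2 * (η * L ^ 2) ≤ η * ‖u‖ ^ 2 * (2 * μ) :=
        mul_le_mul_of_nonneg_left hηL (by positivity)
      nlinarith [a1, a2, a3]
    nlinarith [norm_nonneg (u - η • Δ), norm_nonneg u]
  have main : ∀ k, ‖w k - zt‖ ≤ η * k * ‖Fb‖ := by
    intro k
    induction k with
    | zero => simp [hw0]
    | succ k ih =>
      have e : w (k + 1) - zt = (w k - zt - η • (Fi i (w k) - Fi i zt)) - η • Fb := by
        rw [hw k, smul_add]; abel
      calc ‖w (k + 1) - zt‖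
          ≤ ‖w k - zt - η • (Fi i (w k) - Fi i zt)‖ + ‖η • Fb‖ := by
            rw [e]; exact norm_sub_le _ _
        _ ≤ ‖w k - zt‖ + η * ‖Fb‖ := by
            rw [norm_smul, Real.norm_eq_abs, abs_of_pos hη]
            exact add_le_add_left (contract k) _
        _ ≤ η * k * ‖Fb‖ + η * ‖Fb‖ := add_le_add_left ih _
        _ = η * (k + 1 : ℕ) * ‖Fb‖ := by push_cast; ring
  have hsum0 : ∑ j, Fi j zs = 0 := by
    have hne : ((m : ℝ)⁻¹) ≠ 0 := by positivity
    exact (smul_eq_zero.mp hzs).resolve_left hne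
  have hFbL : ‖Fb‖ ≤ L * ‖zt - zs‖ := by
    have e : Fb = (m : ℝ)⁻¹ • ∑ j, (Fi j zt - Fi j zs) := by
      rw [hFb, Finset.sum_sub_distrib, hsum0, sub_zero]
    rw [e, norm_smul, Real.norm_eq_abs, abs_of_pos (by positivity : (0:ℝ) < (m:ℝ)⁻¹)]
    have hb : ‖∑ j, (Fi j zt - Fi j zs)‖ ≤ ∑ j : Fin m, L * ‖zt - zs‖ :=
      (norm_sum_le _ _).trans (Finset.sum_le_sum fun j _ => hlip j zt zs)
    have hb' : ‖∑ j, (Fi j zt - Fi j zs)‖ ≤ (m : ℝ) * (L * ‖zt - zs‖) := by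
      simpa [Finset.sum_const, Finset.card_univ, nsmul_eq_mul] using hb
    have hm' : (m : ℝ) ≠ 0 := Nat.cast_ne_zero.mpr hm.ne'
    calc (m : ℝ)⁻¹ * ‖∑ j, (Fi j zt - Fi j zs)‖
        ≤ (m : ℝ)⁻¹ * ((m : ℝ) * (L * ‖zt - zs‖)) :=
          mul_le_mul_of_nonneg_left hb' (by positivity)
      _ = L * ‖zt - zs‖ := inv_mul_cancel_left₀ hm' _
  intro k hk1 hkK
  have hkK' : (k : ℝ) ≤ (K : ℝ) := by exact_mod_cast hkK
  have hηK : 0 ≤ η * K := by positivity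
  constructor
  · calc ‖w k - zt‖ ≤ η * k * ‖Fb‖ := main k
      _ ≤ η * K * ‖Fb‖ :=
          mul_le_mul_of_nonneg_right (by nlinarith : η * (k : ℝ) ≤ η * (K : ℝ))
            (norm_nonneg Fb)
  · have h1 : η * K * ‖Fb‖ ≤ η * K * (L * ‖zt - zs‖) :=
      mul_le_mul_of_nonneg_left hFbL hηK
    linarith [h1, (by ring : η * K * (L * ‖zt - zs‖) = η * K * L * ‖zt - zs‖)]
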